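/- For u ∈ (0,1), writing v = √(1-u²), the second derivative of φ satisfies φ''(u) = (1/ln 2)·(artanh(v) - v)/v³, where φ(u) = H((1 - √(1-u²))/2). -/

import Mathlib

open Real

noncomputable def binEnt (q : ℝ) : ℝ := -(q * Real.logb 2 q) - (1 - q) * Real.logb 2 (1 - q)

noncomputable def Bh (q : ℝ) : ℝ := 2 * Real.sqrt (q * (1 - q))

noncomputable def phi (u : ℝ) : ℝ := binEnt ((1 - Real.sqrt (1 - u ^ 2)) / 2)
noncomputable def artanh (v : ℝ) : ℝ := (1/2) * Real.log ((1 + v) / (1 - v))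

noncomputable def F (x : ℝ) : ℝ :=
  x * (Real.log (1 + Real.sqrt (1 - x ^ 2)) - Real.log (1 - Real.sqrt (1 - x ^ 2))) /
    (Real.sqrt (1 - x ^ 2) * (2 * Real.log 2))

lemma hasDerivAt_v {x : ℝ} (hx : x ∈ Set.Ioo (0:ℝ) 1) :
    HasDerivAt (fun y : ℝ => Real.sqrt (1 - y ^ 2)) (-x / Real.sqrt (1 - x ^ 2)) x := by
  obtain ⟨hx0, hx1⟩ := hx
  have h1 : (0:ℝ) < 1 - x ^ 2 := by nlinarith
  have hvpos : 0 < Real.sqrt (1 - x ^ 2) := Real.sqrt_pos.mpr h1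
  have h := (Real.hasDerivAt_sqrt (ne_of_gt h1)).comp x
    ((hasDerivAt_pow 2 x).const_sub 1)
  refine h.congr_deriv ?_
  field_simp
  ring

lemma hasDerivAt_binEnt {q : ℝ} (h0 : 0 < q) (h1 : q < 1) :
    HasDerivAt binEnt ((Real.log (1 - q) - Real.log q) / Real.log 2) q := by
  have hb : binEnt = fun q => (-(q * Real.log q) - (1 - q) * Real.log (1 - q)) / Real.log 2 := by
    funext t
    unfold binEnt Real.logb
    ring
  rw [hb]
  have h2 : (1:ℝ) - q ≠ 0 := by linarith
  have hA : HasDerivAt (fun t : ℝ => t * Real.log t) (Real.log q + 1) q :=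
    Real.hasDerivAt_mul_log (ne_of_gt h0)
  have hB : HasDerivAt (fun t : ℝ => (1 - t) * Real.log (1 - t))
      (-(Real.log (1 - q) + 1)) q := by
    have := (Real.hasDerivAt_mul_log h2).comp q ((hasDerivAt_id q).const_sub 1)
    refine this.congr_deriv ?_
    ring
  have := ((hA.neg.sub hB)).div_const (Real.log 2)
  refine this.congr_deriv ?_
  ring

lemma phi_hasDerivAt {x : ℝ} (hx : x ∈ Set.Ioo (0:ℝ) 1) :
    HasDerivAt phi (F x) x := by
  obtain ⟨hx0, hx1⟩ := hx
  have h1 : (0:ℝ) < 1 - x ^ 2 := by nlinarith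
  set v := Real.sqrt (1 - x ^ 2) with hv
  have hv0 : 0 < v := Real.sqrt_pos.mpr h1
  have hv2 : v ^ 2 = 1 - x ^ 2 := Real.sq_sqrt h1.le
  have hv1 : v < 1 := by nlinarith
  have hq0 : 0 < (1 - v) / 2 := by linarith
  have hq1 : (1 - v) / 2 < 1 := by linarith
  have hQ : HasDerivAt (fun y : ℝ => (1 - Real.sqrt (1 - y ^ 2)) / 2)
      (-(-x / v) / 2) x := ((hasDerivAt_v ⟨hx0, hx1⟩).const_sub 1).div_const 2
  have hB := (hasDerivAt_binEnt hq0 hq1).comp x hQ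
  have hphi : phi = binEnt ∘ fun y : ℝ => (1 - Real.sqrt (1 - y ^ 2)) / 2 := rfl
  rw [hphi]
  refine hB.congr_deriv ?_
  have e1 : (1:ℝ) - (1 - v) / 2 = (1 + v) / 2 := by ring
  rw [e1, Real.log_div (by linarith) (by norm_num), Real.log_div (by linarith) (by norm_num)]
  unfold F
  rw [← hv]
  have hlog2 : Real.log 2 ≠ 0 := Real.log_ne_zero_of_pos_of_ne_one (by norm_num) (by norm_num)
  field_simp
  ring

theorem phi_second_deriv (u : ℝ) (hu : u ∈ Set.Ioo (0:ℝ) 1) :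
    iteratedDeriv 2 phi u =
      (1 / Real.log 2) *
        (_root_.artanh (Real.sqrt (1 - u ^ 2)) - Real.sqrt (1 - u ^ 2)) /
          (Real.sqrt (1 - u ^ 2)) ^ 3 := by
  obtain ⟨hu0, hu1⟩ := hu
  have h1 : (0:ℝ) < 1 - u ^ 2 := by nlinarith
  set v := Real.sqrt (1 - u ^ 2) with hv
  have hv0 : 0 < v := Real.sqrt_pos.mpr h1
  have hv2 : v ^ 2 = 1 - u ^ 2 := Real.sq_sqrt h1.le
  have hv1 : v < 1 := by nlinarith
  have hlog2 : Real.log 2 ≠ 0 := Real.log_ne_zero_of_pos_of_ne_one (by norm_num) (by norm_num)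
  -- step 1
  rw [iteratedDeriv_succ, iteratedDeriv_one]
  -- step 2: deriv phi = F near u
  have hev : deriv phi =ᶠ[nhds u] F := by
    filter_upwards [isOpen_Ioo.mem_nhds (show u ∈ Set.Ioo (0:ℝ) 1 from ⟨hu0, hu1⟩)] with x hx
    exact (phi_hasDerivAt hx).deriv
  rw [hev.deriv_eq]
  -- step 3: HasDerivAt F at u
  have hVd : HasDerivAt (fun y : ℝ => Real.sqrt (1 - y ^ 2)) (-u / v) u :=
    hasDerivAt_v ⟨hu0, hu1⟩
  have hL1 : HasDerivAt (fun y : ℝ => Real.log (1 + Real.sqrt (1 - y ^ 2)))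
      ((1 + v)⁻¹ * (-u / v)) u :=
    HasDerivAt.comp (h₂ := Real.log) u (Real.hasDerivAt_log (by positivity : (1:ℝ) + v ≠ 0)) (hVd.const_add 1)
  have hL2 : HasDerivAt (fun y : ℝ => Real.log (1 - Real.sqrt (1 - y ^ 2)))
      ((1 - v)⁻¹ * -(-u / v)) u :=
    HasDerivAt.comp (h₂ := Real.log) u (Real.hasDerivAt_log (by intro h; nlinarith : (1:ℝ) - v ≠ 0)) (hVd.const_sub 1)
  have hNum : HasDerivAt (fun y : ℝ => y *
      (Real.log (1 + Real.sqrt (1 - y ^ 2)) - Real.log (1 - Real.sqrt (1 - y ^ 2))))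
      (1 * (Real.log (1 + v) - Real.log (1 - v)) +
        u * ((1 + v)⁻¹ * (-u / v) - (1 - v)⁻¹ * -(-u / v))) u :=
    (hasDerivAt_id u).mul (hL1.sub hL2)
  have hDen : HasDerivAt (fun y : ℝ => Real.sqrt (1 - y ^ 2) * (2 * Real.log 2))
      (-u / v * (2 * Real.log 2)) u := hVd.mul_const _
  have hden_ne : v * (2 * Real.log 2) ≠ 0 := by positivity
  have h1v : (1:ℝ) + v ≠ 0 := by positivity
  have h2v : (1:ℝ) - v ≠ 0 := by intro h; nlinarith
  have hNum' : HasDerivAt (fun y : ℝ => y *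
      (Real.log (1 + Real.sqrt (1 - y ^ 2)) - Real.log (1 - Real.sqrt (1 - y ^ 2))))
      ((Real.log (1 + v) - Real.log (1 - v)) - 2 / v) u := by
    convert hNum using 1
    field_simp
    ring_nf
    linear_combination 2 * hv2
  have hF : HasDerivAt F
      ((((Real.log (1 + v) - Real.log (1 - v)) - 2 / v) * (v * (2 * Real.log 2)) -
        u * (Real.log (1 + v) - Real.log (1 - v)) * (-u / v * (2 * Real.log 2))) /
        (v * (2 * Real.log 2)) ^ 2) u := hNum'.div hDen hden_ne
  rw [hF.deriv]
  -- step 4: algebra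
  unfold _root_.artanh
  rw [Real.log_div h1v h2v]
  field_simp
  linear_combination (Real.log (1 + v) - Real.log (1 - v)) * hv2
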